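/- arXiv:1303.2087 — 2 statements merged into one kernel-verified Lean document; each statement's English description precedes it below -/
import Mathlib

section
/- Consider the deterministic discrete memoryless interference channel with binary alphabets and outputs Y1 = X1 AND X2 (multiplication in {0,1}) and Y2 = X1 XOR X2. Its sum-rate capacity equals 1, its capacity region is exactly {(R1,R2) : R1 >= 0, R2 >= 0, R1 + R2 <= 1}, and moreover the maximum over product input distributions p(x1)p(x2) of min{ I(X1,X2;Y2), I(X1;Y1) + I(X2;Y2|X1) } equals 1. -/
open scoped BigOperators

noncomputable section

namespace IT

/-- A probability mass function on a finite type. -/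
def IsPMF {α : Type*} [Fintype α] (p : α → ℝ) : Prop :=
  (∀ a, 0 ≤ p a) ∧ ∑ a, p a = 1

/-- The distribution (pushforward) of a random variable `X` under the pmf `μ`
on the sample space `Ω`. -/
def distOf {Ω α : Type*} [Fintype Ω] [DecidableEq α] (μ : Ω → ℝ) (X : Ω → α) : α → ℝ :=
  fun a => ∑ ω, if X ω = a then μ ω else 0

/-- Shannon entropy (base-2 logarithms) of a pmf on a finite type.
(Recall `Real.logb 2 0 = 0`, so the `0 log 0 = 0` convention is automatic.) -/
def ent {α : Type*} [Fintype α] (p : α → ℝ) : ℝ := -∑ a, p a * Real.logb 2 (p a)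

/-- Entropy `H(X)` of a finite-valued random variable `X` on `(Ω, μ)`. -/
def H {Ω α : Type*} [Fintype Ω] [Fintype α] [DecidableEq α] (μ : Ω → ℝ) (X : Ω → α) : ℝ :=
  ent (distOf μ X)

/-- Mutual information `I(X;Y)`. -/
def MI {Ω α β : Type*} [Fintype Ω] [Fintype α] [DecidableEq α] [Fintype β] [DecidableEq β]
    (μ : Ω → ℝ) (X : Ω → α) (Y : Ω → β) : ℝ :=
  H μ X + H μ Y - H μ (fun ω => (X ω, Y ω))

/-- Conditional mutual information `I(X;Y|Z)`. -/
def CMI {Ω α β γ : Type*} [Fintype Ω] [Fintype α] [DecidableEq α] [Fintype β] [DecidableEq β]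
    [Fintype γ] [DecidableEq γ] (μ : Ω → ℝ) (X : Ω → α) (Y : Ω → β) (Z : Ω → γ) : ℝ :=
  H μ (fun ω => (X ω, Z ω)) + H μ (fun ω => (Y ω, Z ω))
    - H μ (fun ω => (X ω, Y ω, Z ω)) - H μ Z

/-- `B` is conditionally independent of `A` given `C` (a Markov chain `A - C - B`). -/
def CondIndep {Ω α β γ : Type*} [Fintype Ω] [DecidableEq α] [DecidableEq β] [DecidableEq γ]
    (μ : Ω → ℝ) (A : Ω → α) (B : Ω → β) (C : Ω → γ) : Prop :=
  ∀ a b c,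
    distOf μ (fun ω => (A ω, B ω, C ω)) (a, b, c) * distOf μ C c =
      distOf μ (fun ω => (A ω, C ω)) (a, c) * distOf μ (fun ω => (B ω, C ω)) (b, c)

variable {A1 A2 B1 B2 : Type*}

/-- A discrete memoryless interference channel with input alphabets `A1, A2` and
output alphabets `B1, B2`: every pair of inputs yields a pmf on output pairs. -/
def IsChannel [Fintype B1] [Fintype B2] (W : A1 → A2 → B1 × B2 → ℝ) : Prop :=
  ∀ x1 x2, IsPMF (W x1 x2)

/-- DMZIC with weak interference: the transition probability factorizes as
`p(y1,y2|x1,x2) = p(y2|x2) q(y1|x1,y2)`, i.e. one-sided interference together with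
the Markov chain `X2 - (X1,Y2) - Y1`. -/
def WeakZ [Fintype B1] [Fintype B2] (W : A1 → A2 → B1 × B2 → ℝ) : Prop :=
  ∃ (p2 : A2 → B2 → ℝ) (q : A1 → B2 → B1 → ℝ),
    (∀ x2, IsPMF (p2 x2)) ∧ (∀ x1 y2, IsPMF (q x1 y2)) ∧
      ∀ x1 x2 y1 y2, W x1 x2 (y1, y2) = p2 x2 y2 * q x1 y2 y1

/-- Factorization `p(y1,y2|x1,x2) = p(y2|x1,x2) q(y1|x1,y2)`, i.e. the Markov chain
`X2 - (X1,Y2) - Y1`. -/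
def ChainX2X1Y2Y1 [Fintype B1] [Fintype B2] (W : A1 → A2 → B1 × B2 → ℝ) : Prop :=
  ∃ (pa : A1 → A2 → B2 → ℝ) (q : A1 → B2 → B1 → ℝ),
    (∀ x1 x2, IsPMF (pa x1 x2)) ∧ (∀ x1 y2, IsPMF (q x1 y2)) ∧
      ∀ x1 x2 y1 y2, W x1 x2 (y1, y2) = pa x1 x2 y2 * q x1 y2 y1

/-- The `n`-fold memoryless extension of the channel `W`. -/
def nFold (W : A1 → A2 → B1 × B2 → ℝ) (n : ℕ) (a : Fin n → A1) (b : Fin n → A2)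
    (y : (Fin n → B1) × (Fin n → B2)) : ℝ :=
  ∏ i, W (a i) (b i) (y.1 i, y.2 i)

/-- An `(n, M1, M2)` code for the interference channel. -/
structure Code (A1 A2 B1 B2 : Type*) (n M1 M2 : ℕ) where
  enc1 : Fin M1 → Fin n → A1
  enc2 : Fin M2 → Fin n → A2
  dec1 : (Fin n → B1) → Fin M1
  dec2 : (Fin n → B2) → Fin M2

/-- Average probability of error at receiver 1 (messages uniform and independent). -/
def err1 [Fintype B1] [Fintype B2] (W : A1 → A2 → B1 × B2 → ℝ) {n M1 M2 : ℕ}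
    (c : Code A1 A2 B1 B2 n M1 M2) : ℝ :=
  ((M1 : ℝ) * (M2 : ℝ))⁻¹ *
    ∑ w1 : Fin M1, ∑ w2 : Fin M2, ∑ y : (Fin n → B1) × (Fin n → B2),
      if c.dec1 y.1 ≠ w1 then nFold W n (c.enc1 w1) (c.enc2 w2) y else 0

/-- Average probability of error at receiver 2 (messages uniform and independent). -/
def err2 [Fintype B1] [Fintype B2] (W : A1 → A2 → B1 × B2 → ℝ) {n M1 M2 : ℕ}
    (c : Code A1 A2 B1 B2 n M1 M2) : ℝ :=
  ((M1 : ℝ) * (M2 : ℝ))⁻¹ *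
    ∑ w1 : Fin M1, ∑ w2 : Fin M2, ∑ y : (Fin n → B1) × (Fin n → B2),
      if c.dec2 y.2 ≠ w2 then nFold W n (c.enc1 w1) (c.enc2 w2) y else 0

/-- A (nonnegative) rate pair `(R1, R2)` is achievable if there are codes of blocklength `n`,
with at least `2 ^ (n R1)` and `2 ^ (n R2)` messages, whose average error probabilities at
the two receivers can be made arbitrarily small. -/
def Achievable [Fintype B1] [Fintype B2] (W : A1 → A2 → B1 × B2 → ℝ) (R1 R2 : ℝ) : Prop :=
  0 ≤ R1 ∧ 0 ≤ R2 ∧ ∀ ε : ℝ, 0 < ε →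
    ∃ (n M1 M2 : ℕ) (c : Code A1 A2 B1 B2 n M1 M2), 0 < n ∧
      (2 : ℝ) ^ ((n : ℝ) * R1) ≤ (M1 : ℝ) ∧ (2 : ℝ) ^ ((n : ℝ) * R2) ≤ (M2 : ℝ) ∧
      err1 W c ≤ ε ∧ err2 W c ≤ ε

/-- The sum-rate capacity: the supremum of `R1 + R2` over achievable rate pairs. -/
def sumCapacity [Fintype B1] [Fintype B2] (W : A1 → A2 → B1 × B2 → ℝ) : ℝ :=
  sSup {r : ℝ | ∃ R1 R2 : ℝ, Achievable W R1 R2 ∧ r = R1 + R2}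

/-- The capacity region: the closure of the set of achievable rate pairs. -/
def capacityRegion [Fintype B1] [Fintype B2] (W : A1 → A2 → B1 × B2 → ℝ) : Set (ℝ × ℝ) :=
  closure {p : ℝ × ℝ | Achievable W p.1 p.2}

/-- The joint pmf of `(X1, X2, Y1, Y2)` when the product input `p1 × p2` is fed to `W`. -/
def jointOf (W : A1 → A2 → B1 × B2 → ℝ) (p1 : A1 → ℝ) (p2 : A2 → ℝ) :
    A1 × A2 × B1 × B2 → ℝ :=
  fun z => p1 z.1 * p2 z.2.1 * W z.1 z.2.1 (z.2.2.1, z.2.2.2)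

/-- Coordinate projections on `A1 × A2 × B1 × B2`. -/
def pX1 : A1 × A2 × B1 × B2 → A1 := fun z => z.1
def pX2 : A1 × A2 × B1 × B2 → A2 := fun z => z.2.1
def pY1 : A1 × A2 × B1 × B2 → B1 := fun z => z.2.2.1
def pY2 : A1 × A2 × B1 × B2 → B2 := fun z => z.2.2.2

/-- The binary entropy function (base-2 logarithms). -/
def h2 (t : ℝ) : ℝ := -(t * Real.logb 2 t) - (1 - t) * Real.logb 2 (1 - t)

end IT

namespace IT

/-- The deterministic DMIC `Y1 = X1 AND X2`, `Y2 = X1 XOR X2`. -/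
def WAndXor : Bool → Bool → Bool × Bool → ℝ :=
  fun x1 x2 y => if y.1 = (x1 && x2) ∧ y.2 = xor x1 x2 then 1 else 0

def detY1 {n M1 M2 : ℕ} (c : Code Bool Bool Bool Bool n M1 M2) (w1 : Fin M1) (w2 : Fin M2) :
    Fin n → Bool := fun i => c.enc1 w1 i && c.enc2 w2 i

def detY2 {n M1 M2 : ℕ} (c : Code Bool Bool Bool Bool n M1 M2) (w1 : Fin M1) (w2 : Fin M2) :
    Fin n → Bool := fun i => xor (c.enc1 w1 i) (c.enc2 w2 i)

lemma nFold_WAndXor {n : ℕ} (a b : Fin n → Bool) (y : (Fin n → Bool) × (Fin n → Bool)) :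
    nFold WAndXor n a b y =
      if y = (fun i => a i && b i, fun i => xor (a i) (b i)) then 1 else 0 := by
  unfold nFold WAndXor
  rw [Finset.prod_boole]
  congr 1
  simp only [eq_iff_iff]
  constructor
  · intro h
    rw [Prod.ext_iff]
    exact ⟨funext fun i => (h i (Finset.mem_univ i)).1,
           funext fun i => (h i (Finset.mem_univ i)).2⟩
  · intro h i _
    subst h; exact ⟨rfl, rfl⟩

lemma err1_char {n M1 M2 : ℕ} (c : Code Bool Bool Bool Bool n M1 M2) :
    err1 WAndXor c = ((M1 : ℝ) * (M2 : ℝ))⁻¹ *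
      ((Finset.univ.filter fun p : Fin M1 × Fin M2 => c.dec1 (detY1 c p.1 p.2) ≠ p.1).card : ℝ) := by
  unfold err1
  congr 1
  have inner : ∀ (w1 : Fin M1) (w2 : Fin M2),
      (∑ y : (Fin n → Bool) × (Fin n → Bool),
          if c.dec1 y.1 ≠ w1 then nFold WAndXor n (c.enc1 w1) (c.enc2 w2) y else 0)
        = if c.dec1 (detY1 c w1 w2) ≠ w1 then 1 else 0 := by
    intro w1 w2
    have hstep : ∀ y : (Fin n → Bool) × (Fin n → Bool),
        (if c.dec1 y.1 ≠ w1 then nFold WAndXor n (c.enc1 w1) (c.enc2 w2) y else 0)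
          = if y = (detY1 c w1 w2, detY2 c w1 w2)
              then (if c.dec1 (detY1 c w1 w2) ≠ w1 then (1:ℝ) else 0) else 0 := by
      intro y
      rw [nFold_WAndXor]
      by_cases hy : y = (detY1 c w1 w2, detY2 c w1 w2)
      · subst hy
        by_cases hd : c.dec1 (detY1 c w1 w2) ≠ w1 <;>
          first
            | (simp only [hd]; rfl)
            | (simp [hd, detY1, detY2]; exact ⟨rfl, rfl⟩)
      · rw [if_neg hy]
        have h0 : (if y = ((fun i => c.enc1 w1 i && c.enc2 w2 i : Fin n → Bool),
            (fun i => xor (c.enc1 w1 i) (c.enc2 w2 i) : Fin n → Bool)) then (1:ℝ) else 0) = 0 :=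
          if_neg hy
        rw [h0, ite_self]
    rw [Finset.sum_congr rfl fun y _ => hstep y, Finset.sum_ite_eq' Finset.univ]
    simp
  rw [Finset.sum_congr rfl fun w1 _ => Finset.sum_congr rfl fun w2 _ => inner w1 w2]
  rw [← Finset.sum_boole (fun p : Fin M1 × Fin M2 => c.dec1 (detY1 c p.1 p.2) ≠ p.1) Finset.univ,
    Fintype.sum_prod_type]

lemma err2_char {n M1 M2 : ℕ} (c : Code Bool Bool Bool Bool n M1 M2) :
    err2 WAndXor c = ((M1 : ℝ) * (M2 : ℝ))⁻¹ *
      ((Finset.univ.filter fun p : Fin M1 × Fin M2 => c.dec2 (detY2 c p.1 p.2) ≠ p.2).card : ℝ) := by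
  unfold err2
  congr 1
  have inner : ∀ (w1 : Fin M1) (w2 : Fin M2),
      (∑ y : (Fin n → Bool) × (Fin n → Bool),
          if c.dec2 y.2 ≠ w2 then nFold WAndXor n (c.enc1 w1) (c.enc2 w2) y else 0)
        = if c.dec2 (detY2 c w1 w2) ≠ w2 then 1 else 0 := by
    intro w1 w2
    have hstep : ∀ y : (Fin n → Bool) × (Fin n → Bool),
        (if c.dec2 y.2 ≠ w2 then nFold WAndXor n (c.enc1 w1) (c.enc2 w2) y else 0)
          = if y = (detY1 c w1 w2, detY2 c w1 w2)
              then (if c.dec2 (detY2 c w1 w2) ≠ w2 then (1:ℝ) else 0) else 0 := by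
      intro y
      rw [nFold_WAndXor]
      by_cases hy : y = (detY1 c w1 w2, detY2 c w1 w2)
      · subst hy
        by_cases hd : c.dec2 (detY2 c w1 w2) ≠ w2 <;>
          first
            | (simp only [hd]; rfl)
            | (simp [hd, detY1, detY2]; exact ⟨rfl, rfl⟩)
      · rw [if_neg hy]
        have h0 : (if y = ((fun i => c.enc1 w1 i && c.enc2 w2 i : Fin n → Bool),
            (fun i => xor (c.enc1 w1 i) (c.enc2 w2 i) : Fin n → Bool)) then (1:ℝ) else 0) = 0 :=
          if_neg hy
        rw [h0, ite_self]
    rw [Finset.sum_congr rfl fun y _ => hstep y, Finset.sum_ite_eq' Finset.univ]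
    simp
  rw [Finset.sum_congr rfl fun w1 _ => Finset.sum_congr rfl fun w2 _ => inner w1 w2]
  rw [← Finset.sum_boole (fun p : Fin M1 × Fin M2 => c.dec2 (detY2 c p.1 p.2) ≠ p.2) Finset.univ,
    Fintype.sum_prod_type]

lemma converse_count {n M1 M2 : ℕ} (c : Code Bool Bool Bool Bool n M1 M2)
    (hM1 : 0 < M1) (hM2 : 0 < M2) :
    (1 - (err1 WAndXor c + err2 WAndXor c)) * ((M1 : ℝ) * (M2 : ℝ)) ≤ (2 : ℝ) ^ (n : ℕ) := by
  classical
  set S : Finset (Fin M1 × Fin M2) := Finset.univ.filter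
    (fun p => c.dec1 (detY1 c p.1 p.2) = p.1 ∧ c.dec2 (detY2 c p.1 p.2) = p.2) with hS
  set F1 : Finset (Fin M1 × Fin M2) := Finset.univ.filter
    (fun p => c.dec1 (detY1 c p.1 p.2) ≠ p.1) with hF1
  set F2 : Finset (Fin M1 × Fin M2) := Finset.univ.filter
    (fun p => c.dec2 (detY2 c p.1 p.2) ≠ p.2) with hF2
  have hinj : Set.InjOn (fun p : Fin M1 × Fin M2 => detY2 c p.1 p.2)
      (S : Set (Fin M1 × Fin M2)) := by
    intro p hp q hq hpq
    simp only [hS, Finset.coe_filter, Set.mem_setOf_eq] at hp hq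
    have h2p := hp.2.2
    have h2q := hq.2.2
    have hpq2 : detY2 c p.1 p.2 = detY2 c q.1 q.2 := hpq
    have hw2 : p.2 = q.2 := by rw [← h2p, ← h2q, hpq2]
    have henc1 : ∀ i, c.enc1 p.1 i = c.enc1 q.1 i := by
      intro i
      have hxy := congrFun hpq i
      simp only [detY2] at hxy
      rw [hw2] at hxy
      rcases Bool.dichotomy (c.enc2 q.2 i) with h | h <;>
        rcases Bool.dichotomy (c.enc1 p.1 i) with h1 | h1 <;>
        rcases Bool.dichotomy (c.enc1 q.1 i) with h2 | h2 <;>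
        simp_all
    have hY1 : detY1 c p.1 p.2 = detY1 c q.1 q.2 := by
      funext i; simp only [detY1, henc1 i, hw2]
    have hw1 : p.1 = q.1 := by rw [← hp.2.1, ← hq.2.1, hY1]
    exact Prod.ext hw1 hw2
  have hcardS : S.card ≤ 2 ^ n := by
    have hc := Finset.card_le_card_of_injOn (fun p : Fin M1 × Fin M2 => detY2 c p.1 p.2)
      (fun a _ => Finset.mem_univ _) hinj
    simpa using hc
  have hsub : Finset.univ.filter (fun p : Fin M1 × Fin M2 =>
      ¬(c.dec1 (detY1 c p.1 p.2) = p.1 ∧ c.dec2 (detY2 c p.1 p.2) = p.2)) ⊆ F1 ∪ F2 := by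
    intro p hp
    simp only [Finset.mem_filter, Finset.mem_univ, true_and, not_and_or] at hp
    simp only [hF1, hF2, Finset.mem_union, Finset.mem_filter, Finset.mem_univ, true_and]
    exact hp
  have hcompl : (Finset.univ.filter (fun p : Fin M1 × Fin M2 =>
      ¬(c.dec1 (detY1 c p.1 p.2) = p.1 ∧ c.dec2 (detY2 c p.1 p.2) = p.2))).card
        ≤ F1.card + F2.card :=
    (Finset.card_le_card hsub).trans (Finset.card_union_le _ _)
  have hsplit : S.card + (Finset.univ.filter (fun p : Fin M1 × Fin M2 =>
      ¬(c.dec1 (detY1 c p.1 p.2) = p.1 ∧ c.dec2 (detY2 c p.1 p.2) = p.2))).card = M1 * M2 := by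
    rw [hS, Finset.card_filter_add_card_filter_not]
    simp
  have hMM : (0:ℝ) < (M1 : ℝ) * (M2 : ℝ) := by positivity
  have hm1 : (M1:ℝ) ≠ 0 := Nat.cast_ne_zero.2 hM1.ne'
  have hm2 : (M2:ℝ) ≠ 0 := Nat.cast_ne_zero.2 hM2.ne'
  have he1 : err1 WAndXor c * ((M1:ℝ) * M2) = (F1.card : ℝ) := by
    rw [err1_char, ← hF1]; field_simp
  have he2 : err2 WAndXor c * ((M1:ℝ) * M2) = (F2.card : ℝ) := by
    rw [err2_char, ← hF2]; field_simp
  have hnat : M1 * M2 ≤ S.card + (F1.card + F2.card) := by omega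
  have hreal : ((M1:ℝ) * M2) - (F1.card : ℝ) - (F2.card : ℝ) ≤ ((2:ℕ)^n : ℝ) := by
    have h1 : ((M1 * M2 : ℕ) : ℝ) ≤ ((S.card + (F1.card + F2.card) : ℕ) : ℝ) := by
      exact_mod_cast hnat
    push_cast at h1
    have h2 : ((S.card : ℕ) : ℝ) ≤ ((2:ℕ)^n : ℝ) := by exact_mod_cast hcardS
    push_cast at h2 ⊢
    linarith
  push_cast at hreal
  have hexp : (1 - (err1 WAndXor c + err2 WAndXor c)) * ((M1:ℝ) * M2)
      = (M1:ℝ) * M2 - err1 WAndXor c * ((M1:ℝ) * M2) - err2 WAndXor c * ((M1:ℝ) * M2) := by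
    ring
  rw [hexp, he1, he2]
  exact_mod_cast hreal

lemma sum_le_one_of_achievable {R1 R2 : ℝ} (h : Achievable WAndXor R1 R2) : R1 + R2 ≤ 1 := by
  obtain ⟨h1, h2, h⟩ := h
  refine le_of_forall_pos_le_add fun δ hδ => ?_
  set ε : ℝ := (1 - (2:ℝ) ^ (-δ)) / 2 with hε
  have hlt : (2:ℝ) ^ (-δ) < 1 := Real.rpow_lt_one_of_one_lt_of_neg one_lt_two (by linarith)
  have hpos : (0:ℝ) < (2:ℝ) ^ (-δ) := Real.rpow_pos_of_pos two_pos _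
  have hεpos : 0 < ε := by rw [hε]; linarith
  obtain ⟨n, M1, M2, c, hn, hR1, hR2, he1, he2⟩ := h ε hεpos
  have hM1 : 0 < M1 := by
    by_contra hM
    push_neg at hM
    interval_cases M1
    · simp only [Nat.cast_zero] at hR1
      exact absurd hR1 (not_le.2 (Real.rpow_pos_of_pos two_pos _))
  have hM2 : 0 < M2 := by
    by_contra hM
    push_neg at hM
    interval_cases M2
    · simp only [Nat.cast_zero] at hR2
      exact absurd hR2 (not_le.2 (Real.rpow_pos_of_pos two_pos _))
  have hcount := converse_count c hM1 hM2
  have hd : (2:ℝ) ^ (-δ) ≤ 1 - (err1 WAndXor c + err2 WAndXor c) := by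
    rw [hε] at he1 he2; linarith
  have hMM : (2:ℝ) ^ ((n:ℝ) * (R1 + R2)) ≤ (M1:ℝ) * M2 := by
    have : (2:ℝ) ^ ((n:ℝ) * (R1 + R2)) = (2:ℝ) ^ ((n:ℝ) * R1) * (2:ℝ) ^ ((n:ℝ) * R2) := by
      rw [← Real.rpow_add two_pos]; ring_nf
    rw [this]
    exact mul_le_mul hR1 hR2 (le_of_lt (Real.rpow_pos_of_pos two_pos _)) (by positivity)
  have hchain : (2:ℝ) ^ (-δ + (n:ℝ) * (R1 + R2)) ≤ (2:ℝ) ^ ((n:ℝ)) := by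
    rw [Real.rpow_add two_pos]
    calc (2:ℝ) ^ (-δ) * (2:ℝ) ^ ((n:ℝ) * (R1 + R2))
        ≤ (1 - (err1 WAndXor c + err2 WAndXor c)) * ((M1:ℝ) * M2) := by
          apply mul_le_mul hd hMM (by positivity) (by linarith [hd, hpos])
      _ ≤ (2:ℝ) ^ (n:ℕ) := hcount
      _ = (2:ℝ) ^ ((n:ℝ)) := (Real.rpow_natCast 2 n).symm
  have hexp : -δ + (n:ℝ) * (R1 + R2) ≤ (n:ℝ) :=
    (Real.rpow_le_rpow_left_iff one_lt_two).1 hchain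
  have hnpos : (0:ℝ) < n := by exact_mod_cast hn
  have hsum : (n:ℝ) * (R1 + R2) ≤ (n:ℝ) + δ := by linarith
  have hn1 : (1:ℝ) ≤ (n:ℝ) := by exact_mod_cast hn
  have hmul : (n:ℝ) * (R1 + R2) ≤ (n:ℝ) * (1 + δ) := by nlinarith
  exact (mul_le_mul_iff_right₀ hnpos).1 hmul

/-- vector-of-bools to message index equivalence -/

def boolEquiv (k : ℕ) : (Fin k → Bool) ≃ Fin (2 ^ k) :=
  (Equiv.arrowCongr (Equiv.refl (Fin k)) finTwoEquiv.symm).trans finFunctionFinEquiv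

def goodCode (n k : ℕ) (hk : k ≤ n) : Code Bool Bool Bool Bool n (2 ^ k) (2 ^ (n - k)) where
  enc1 := fun w1 i => if h : (i : ℕ) < k then (boolEquiv k).symm w1 ⟨i, h⟩ else false
  enc2 := fun w2 i => if h : (i : ℕ) < k then true else
    (boolEquiv (n - k)).symm w2 ⟨(i : ℕ) - k, by omega⟩
  dec1 := fun y => boolEquiv k (fun j => y ⟨j, lt_of_lt_of_le j.2 hk⟩)
  dec2 := fun y => boolEquiv (n - k) (fun j => y ⟨k + j, by omega⟩)

lemma goodCode_dec1 (n k : ℕ) (hk : k ≤ n) (w1 : Fin (2 ^ k)) (w2 : Fin (2 ^ (n - k))) :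
    (goodCode n k hk).dec1 (detY1 (goodCode n k hk) w1 w2) = w1 := by
  unfold goodCode detY1
  simp only
  have : (fun j : Fin k => ((if h : ((⟨j, lt_of_lt_of_le j.2 hk⟩ : Fin n) : ℕ) < k
        then (boolEquiv k).symm w1 ⟨(⟨j, lt_of_lt_of_le j.2 hk⟩ : Fin n), h⟩ else false) &&
      (if h : ((⟨j, lt_of_lt_of_le j.2 hk⟩ : Fin n) : ℕ) < k then true
        else (boolEquiv (n - k)).symm w2 ⟨((⟨j, lt_of_lt_of_le j.2 hk⟩ : Fin n) : ℕ) - k, by omega⟩)))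
      = (boolEquiv k).symm w1 := by
    funext j
    have hj : ((⟨j, lt_of_lt_of_le j.2 hk⟩ : Fin n) : ℕ) < k := j.2
    rw [dif_pos hj, dif_pos hj, Bool.and_true]
  rw [this, Equiv.apply_symm_apply]

lemma goodCode_dec2 (n k : ℕ) (hk : k ≤ n) (w1 : Fin (2 ^ k)) (w2 : Fin (2 ^ (n - k))) :
    (goodCode n k hk).dec2 (detY2 (goodCode n k hk) w1 w2) = w2 := by
  set e := boolEquiv (n - k) with he
  have key : ∀ j : Fin (n - k),
      detY2 (goodCode n k hk) w1 w2 ⟨k + (j : ℕ), by omega⟩ = e.symm w2 j := by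
    intro j
    have hj : ¬ ((k + (j : ℕ)) < k) := by omega
    have e1 : (goodCode n k hk).enc1 w1 ⟨k + (j : ℕ), by omega⟩ = false := dif_neg hj
    have e2 : (goodCode n k hk).enc2 w2 ⟨k + (j : ℕ), by omega⟩
        = e.symm w2 ⟨k + (j : ℕ) - k, by omega⟩ := dif_neg hj
    show xor ((goodCode n k hk).enc1 w1 ⟨k + (j : ℕ), by omega⟩)
        ((goodCode n k hk).enc2 w2 ⟨k + (j : ℕ), by omega⟩) = e.symm w2 j
    rw [e1, e2, Bool.false_xor]
    have hix : (⟨k + (j : ℕ) - k, by omega⟩ : Fin (n - k)) = j := by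
      apply Fin.ext
      show k + (j : ℕ) - k = (j : ℕ)
      omega
    rw [hix]
  have h0 : (goodCode n k hk).dec2 (detY2 (goodCode n k hk) w1 w2)
      = e (fun j : Fin (n - k) => detY2 (goodCode n k hk) w1 w2 ⟨k + (j : ℕ), by omega⟩) := rfl
  rw [h0, funext key, Equiv.apply_symm_apply]

lemma goodCode_err1 (n k : ℕ) (hk : k ≤ n) : err1 WAndXor (goodCode n k hk) = 0 := by
  rw [err1_char]
  have : (Finset.univ.filter fun p : Fin (2^k) × Fin (2^(n-k)) =>
      (goodCode n k hk).dec1 (detY1 (goodCode n k hk) p.1 p.2) ≠ p.1) = ∅ := by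
    apply Finset.filter_eq_empty_iff.2
    intro p _
    simp [goodCode_dec1 n k hk p.1 p.2]
  rw [this]
  simp

lemma goodCode_err2 (n k : ℕ) (hk : k ≤ n) : err2 WAndXor (goodCode n k hk) = 0 := by
  rw [err2_char]
  have : (Finset.univ.filter fun p : Fin (2^k) × Fin (2^(n-k)) =>
      (goodCode n k hk).dec2 (detY2 (goodCode n k hk) p.1 p.2) ≠ p.2) = ∅ := by
    apply Finset.filter_eq_empty_iff.2
    intro p _
    simp [goodCode_dec2 n k hk p.1 p.2]
  rw [this]
  simp

lemma achievable_of_code {R1 R2 : ℝ} (h1 : 0 ≤ R1) (h2 : 0 ≤ R2) (n k : ℕ) (hn : 0 < n)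
    (hk : k ≤ n) (hA : (n : ℝ) * R1 ≤ (k : ℝ)) (hB : (n : ℝ) * R2 ≤ ((n - k : ℕ) : ℝ)) :
    Achievable WAndXor R1 R2 := by
  refine ⟨h1, h2, fun ε hε => ⟨n, 2 ^ k, 2 ^ (n - k), goodCode n k hk, hn, ?_, ?_, ?_, ?_⟩⟩
  · calc (2:ℝ) ^ ((n:ℝ) * R1) ≤ (2:ℝ) ^ ((k:ℕ):ℝ) :=
        Real.rpow_le_rpow_of_exponent_le one_le_two hA
      _ = ((2 ^ k : ℕ) : ℝ) := by rw [Real.rpow_natCast]; push_cast; ring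
  · calc (2:ℝ) ^ ((n:ℝ) * R2) ≤ (2:ℝ) ^ (((n - k:ℕ):ℕ):ℝ) :=
        Real.rpow_le_rpow_of_exponent_le one_le_two hB
      _ = ((2 ^ (n - k) : ℕ) : ℝ) := by rw [Real.rpow_natCast]; push_cast; ring
  · rw [goodCode_err1]; exact hε.le
  · rw [goodCode_err2]; exact hε.le

lemma achievable_of_sum_lt {R1 R2 : ℝ} (h1 : 0 ≤ R1) (h2 : 0 ≤ R2) (hs : R1 + R2 < 1) :
    Achievable WAndXor R1 R2 := by
  set δ : ℝ := 1 - R1 - R2 with hδ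
  have hδpos : 0 < δ := by rw [hδ]; linarith
  set n : ℕ := max 1 ⌈δ⁻¹⌉₊ with hn
  have hn1 : 1 ≤ n := le_max_left _ _
  have hnpos : 0 < n := hn1
  have hnR : (n : ℝ) ≥ δ⁻¹ := by
    calc (n:ℝ) ≥ (⌈δ⁻¹⌉₊ : ℝ) := by exact_mod_cast le_max_right 1 ⌈δ⁻¹⌉₊
      _ ≥ δ⁻¹ := Nat.le_ceil _
  have hnδ : (1:ℝ) ≤ (n:ℝ) * δ := by
    rw [ge_iff_le, inv_le_iff_one_le_mul₀ hδpos] at hnR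
    linarith [hnR]
  set k : ℕ := ⌈(n:ℝ) * R1⌉₊ with hkdef
  have hA : (n:ℝ) * R1 ≤ (k:ℝ) := Nat.le_ceil _
  have hkub : (k:ℝ) < (n:ℝ) * R1 + 1 := Nat.ceil_lt_add_one (by positivity)
  have hkn : (k:ℝ) ≤ (n:ℝ) := by nlinarith
  have hk : k ≤ n := by exact_mod_cast hkn
  have hB : (n:ℝ) * R2 ≤ ((n - k : ℕ) : ℝ) := by
    rw [Nat.cast_sub hk]
    nlinarith
  exact achievable_of_code h1 h2 n k hnpos hk hA hB

lemma achievable_one_zero : Achievable WAndXor 1 0 := by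
  refine achievable_of_code zero_le_one le_rfl 1 1 one_pos le_rfl (by norm_num) (by norm_num)

lemma sumCapacity_eq_one : sumCapacity WAndXor = 1 := by
  apply IsGreatest.csSup_eq
  constructor
  · exact ⟨1, 0, achievable_one_zero, by ring⟩
  · rintro r ⟨R1, R2, hach, rfl⟩
    exact sum_le_one_of_achievable hach

lemma capacityRegion_eq :
    capacityRegion WAndXor = {p : ℝ × ℝ | 0 ≤ p.1 ∧ 0 ≤ p.2 ∧ p.1 + p.2 ≤ 1} := by
  apply Set.Subset.antisymm
  · apply closure_minimal
    · rintro ⟨R1, R2⟩ h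
      exact ⟨h.1, h.2.1, sum_le_one_of_achievable h⟩
    · have hT : {p : ℝ × ℝ | 0 ≤ p.1 ∧ 0 ≤ p.2 ∧ p.1 + p.2 ≤ 1}
          = {p : ℝ × ℝ | 0 ≤ p.1} ∩ ({p : ℝ × ℝ | 0 ≤ p.2} ∩ {p : ℝ × ℝ | p.1 + p.2 ≤ 1}) := rfl
      rw [hT]
      exact (isClosed_le continuous_const continuous_fst).inter
        ((isClosed_le continuous_const continuous_snd).inter
          (isClosed_le (continuous_fst.add continuous_snd) continuous_const))
  · rintro p ⟨hp1, hp2, hps⟩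
    have htend : Filter.Tendsto
        (fun m : ℕ => ((1 - 1/((m:ℝ)+1)) * p.1, (1 - 1/((m:ℝ)+1)) * p.2))
        Filter.atTop (nhds p) := by
      have h1 : Filter.Tendsto (fun m : ℕ => 1 - 1/((m:ℝ)+1)) Filter.atTop (nhds 1) := by
        have h0 := tendsto_one_div_add_atTop_nhds_zero_nat (𝕜 := ℝ)
        have h2 := (tendsto_const_nhds :
          Filter.Tendsto (fun _ : ℕ => (1:ℝ)) Filter.atTop (nhds 1)).sub h0
        simpa using h2
      have hp := (h1.mul (tendsto_const_nhds (x := p.1))).prodMk_nhds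
        (h1.mul (tendsto_const_nhds (x := p.2)))
      simpa using hp
    apply mem_closure_of_tendsto htend
    apply Filter.Eventually.of_forall
    intro m
    have hd0 : (0:ℝ) < (m:ℝ) + 1 := by positivity
    have ht0 : 0 ≤ 1 - 1/((m:ℝ)+1) := by
      have : 1/((m:ℝ)+1) ≤ 1 := by
        rw [div_le_one hd0]; linarith [(Nat.cast_nonneg m : (0:ℝ) ≤ (m:ℝ))]
      linarith
    have ht1 : 1 - 1/((m:ℝ)+1) < 1 := by
      have : 0 < 1/((m:ℝ)+1) := by positivity
      linarith
    refine achievable_of_sum_lt (mul_nonneg ht0 hp1) (mul_nonneg ht0 hp2) ?_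
    have hre : (1 - 1/((m:ℝ)+1)) * p.1 + (1 - 1/((m:ℝ)+1)) * p.2
        = (1 - 1/((m:ℝ)+1)) * (p.1 + p.2) := by ring
    rw [hre]
    calc (1 - 1/((m:ℝ)+1)) * (p.1 + p.2) ≤ (1 - 1/((m:ℝ)+1)) * 1 :=
          mul_le_mul_of_nonneg_left hps ht0
      _ < 1 := by linarith

-- now entropy part

lemma neg_mul_logb_le (t : ℝ) (ht : 0 ≤ t) :
    -(t * Real.logb 2 t) ≤ t + (1/2 - t) / Real.log 2 := by
  have hlog2 : 0 < Real.log 2 := Real.log_pos one_lt_two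
  rcases eq_or_lt_of_le ht with h | h
  · rw [← h]
    simp
    positivity
  · have hkey : Real.log (1/(2*t)) ≤ 1/(2*t) - 1 := Real.log_le_sub_one_of_pos (by positivity)
    have hsplit : Real.log (1/(2*t)) = -(Real.log 2 + Real.log t) := by
      rw [one_div, Real.log_inv, Real.log_mul (by norm_num) h.ne']
    rw [hsplit] at hkey
    have goal2 : -(t * Real.log t) ≤ t * Real.log 2 + (1/2 - t) := by
      have hhalf : t * (1/(2*t)) = 1/2 := by field_simp
      nlinarith [mul_le_mul_of_nonneg_left hkey h.le]
    have hrw : -(t * Real.logb 2 t) = (-(t * Real.log t)) / Real.log 2 := by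
      rw [Real.logb]; ring
    rw [hrw, div_le_iff₀ hlog2]
    have hrw2 : (t + (1/2 - t)/Real.log 2) * Real.log 2 = t * Real.log 2 + (1/2 - t) := by
      field_simp
    rw [hrw2]
    exact goal2

lemma ent_bool_le_one (q : Bool → ℝ) (h0 : ∀ b, 0 ≤ q b) (h1 : q true + q false = 1) :
    ent q ≤ 1 := by
  have hlog2 : 0 < Real.log 2 := Real.log_pos one_lt_two
  have ht := neg_mul_logb_le (q true) (h0 true)
  have hf := neg_mul_logb_le (q false) (h0 false)
  have hrw : ent q = -(q true * Real.logb 2 (q true)) + -(q false * Real.logb 2 (q false)) := by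
    rw [ent, Fintype.sum_bool]; ring
  rw [hrw]
  have hz : (1/2 - q true)/Real.log 2 + (1/2 - q false)/Real.log 2 = 0 := by
    have : (1/2 - q true) + (1/2 - q false) = 0 := by linarith
    field_simp
    linarith
  linarith

lemma jointOf_nonneg {p1 p2 : Bool → ℝ} (h1 : ∀ a, 0 ≤ p1 a) (h2 : ∀ a, 0 ≤ p2 a) :
    ∀ z, 0 ≤ jointOf WAndXor p1 p2 z := by
  intro z
  unfold jointOf WAndXor
  have : (0:ℝ) ≤ if z.2.2.1 = (z.1 && z.2.1) ∧ z.2.2.2 = xor z.1 z.2.1 then 1 else 0 := by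
    split <;> norm_num
  exact mul_nonneg (mul_nonneg (h1 _) (h2 _)) this

lemma hXY2_eq (p1 p2 : Bool → ℝ) :
    H (jointOf WAndXor p1 p2) (fun z => ((pX1 z, pX2 z), pY2 z))
      = H (jointOf WAndXor p1 p2) (fun z => (pX1 z, pX2 z)) := by
  simp only [H, ent, distOf, jointOf, WAndXor, pX1, pX2, pY2,
    Fintype.sum_prod_type, Fintype.sum_bool]
  norm_num

lemma distY2_nonneg {p1 p2 : Bool → ℝ} (h1 : ∀ a, 0 ≤ p1 a) (h2 : ∀ a, 0 ≤ p2 a) :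
    ∀ b, 0 ≤ distOf (jointOf WAndXor p1 p2) pY2 b := by
  intro b
  exact Finset.sum_nonneg fun ω _ => by
    split
    · exact jointOf_nonneg h1 h2 ω
    · exact le_rfl

lemma distY2_sum {p1 p2 : Bool → ℝ} (hp1 : IsPMF p1) (hp2 : IsPMF p2) :
    distOf (jointOf WAndXor p1 p2) pY2 true + distOf (jointOf WAndXor p1 p2) pY2 false = 1 := by
  have h1 : p1 true + p1 false = 1 := by
    have := hp1.2; rwa [Fintype.sum_bool] at this
  have h2 : p2 true + p2 false = 1 := by
    have := hp2.2; rwa [Fintype.sum_bool] at this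
  simp only [distOf, jointOf, WAndXor, pY2, Fintype.sum_prod_type, Fintype.sum_bool]
  norm_num
  linear_combination (p2 true + p2 false) * h1 + h2

lemma mi1_le_one {p1 p2 : Bool → ℝ} (hp1 : IsPMF p1) (hp2 : IsPMF p2) :
    MI (jointOf WAndXor p1 p2) (fun z => (pX1 z, pX2 z)) pY2 ≤ 1 := by
  unfold MI
  rw [hXY2_eq]
  have : H (jointOf WAndXor p1 p2) (pY2) ≤ 1 :=
    ent_bool_le_one _ (distY2_nonneg hp1.1 hp2.1) (distY2_sum hp1 hp2)
  linarith

lemma logb_two_half : Real.logb 2 (1/2 : ℝ) = -1 := by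
  rw [one_div, Real.logb_inv, Real.logb_self_eq_one] <;> norm_num

lemma value_eq_one :
    min (MI (jointOf WAndXor (fun b => if b then (1:ℝ) else 0) (fun _ => 1/2))
          (fun z => (pX1 z, pX2 z)) pY2)
        (MI (jointOf WAndXor (fun b => if b then (1:ℝ) else 0) (fun _ => 1/2)) pX1 pY1
          + CMI (jointOf WAndXor (fun b => if b then (1:ℝ) else 0) (fun _ => 1/2)) pX2 pY2 pX1)
      = 1 := by
  simp only [MI, CMI, H, ent, distOf, jointOf, WAndXor, pX1, pX2, pY1, pY2,
    Fintype.sum_prod_type, Fintype.sum_bool]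
  norm_num [logb_two_half]

/-- For the deterministic DMIC `Y1 = X1 AND X2`, `Y2 = X1 XOR X2`:
the sum-rate capacity is `1`, the capacity region is
`{(R1,R2) : R1 ≥ 0, R2 ≥ 0, R1 + R2 ≤ 1}`, and the maximum over product inputs of
`min{I(X1,X2;Y2), I(X1;Y1) + I(X2;Y2|X1)}` equals `1`. -/
theorem and_xor_capacity :
    sumCapacity WAndXor = 1
    ∧ capacityRegion WAndXor = {p : ℝ × ℝ | 0 ≤ p.1 ∧ 0 ≤ p.2 ∧ p.1 + p.2 ≤ 1}
    ∧ IsGreatest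
        {v : ℝ | ∃ p1 p2 : Bool → ℝ, IsPMF p1 ∧ IsPMF p2 ∧
          v = min (MI (jointOf WAndXor p1 p2) (fun z => (pX1 z, pX2 z)) pY2)
                  (MI (jointOf WAndXor p1 p2) pX1 pY1
                    + CMI (jointOf WAndXor p1 p2) pX2 pY2 pX1)}
        1 := by
  refine ⟨sumCapacity_eq_one, capacityRegion_eq, ?_, ?_⟩
  · refine ⟨(fun b => if b then (1:ℝ) else 0), (fun _ => 1/2), ?_, ?_, value_eq_one.symm⟩
    · exact ⟨fun a => by cases a <;> norm_num, by rw [Fintype.sum_bool]; norm_num⟩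
    · exact ⟨fun _ => by norm_num, by rw [Fintype.sum_bool]; norm_num⟩
  · rintro v ⟨p1, p2, hp1, hp2, rfl⟩
    exact (min_le_left _ _).trans (mi1_le_one hp1 hp2)


end IT
end
end

section
/- There exists a one-sided binary channel for which the mutual information condition I(X2;Y2) >= I(X2;Y1|X1) holds for all product inputs but the Markov chain X2 - (X1,Y2) - Y1 factorization fails. Concretely, let the marginal channels be p(y1=1|x1=0,x2=0)=0.1, p(y1=1|x1=0,x2=1)=0.3, p(y1=1|x1=1,x2=0)=0.5, p(y1=1|x1=1,x2=1)=0.25, and p(y2=1|x2=0)=0.1, p(y2=1|x2=1)=0.5 (with p(y2|x1,x2)=p(y2|x2)). Then: (i) for every pair of independent binary random variables X1 ~ Bernoulli(p1), X2 ~ Bernoulli(p2) with p1, p2 in [0,1], I(X2;Y2) >= I(X2;Y1|X1); and (ii) there is no conditional probability q(y1|x1,y2) on {0,1} such that p(y1|x1,x2) = sum_{y2} p(y2|x2) q(y1|x1,y2) for all x1, x2, y1. -/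
open scoped BigOperators

noncomputable section

namespace IT

/-- `P(Y1 = 1 | X1 = x1, X2 = x2)` for the counterexample channel. -/
def fval : Bool → Bool → ℝ := fun x1 x2 =>
  if x1 then (if x2 then 0.25 else 0.5) else (if x2 then 0.3 else 0.1)

/-- `P(Y2 = 1 | X2 = x2)` for the counterexample channel. -/
def gval : Bool → ℝ := fun x2 => if x2 then 0.5 else 0.1

/-- Marginal channel to receiver 1: `p(y1|x1,x2)`. -/
def W1m : Bool → Bool → Bool → ℝ := fun x1 x2 y1 => if y1 then fval x1 x2 else 1 - fval x1 x2

/-- Marginal channel to receiver 2: `p(y2|x2)` (one-sided interference). -/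
def W2m : Bool → Bool → ℝ := fun x2 y2 => if y2 then gval x2 else 1 - gval x2

open Real

lemma logb_split (x y : ℝ) (hx : 0 ≤ x) (hy : 0 ≤ y) :
    x * y * Real.logb 2 (x * y) = y * (x * Real.logb 2 x) + x * (y * Real.logb 2 y) := by
  rcases eq_or_lt_of_le hx with h | h
  · simp [← h]
  rcases eq_or_lt_of_le hy with h' | h'
  · simp [← h']
  rw [Real.logb_mul (ne_of_gt h) (ne_of_gt h')]; ring

lemma ent_pair_snd (w : Bool → ℝ) (g : Bool → Bool → ℝ) (hw : ∀ x, 0 ≤ w x)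
    (hg : ∀ x a, 0 ≤ g x a) (hgs : ∀ x, g x true + g x false = 1) :
    ent (fun q : Bool × Bool => w q.2 * g q.2 q.1)
      = ent w + (w true * ent (g true) + w false * ent (g false)) := by
  simp only [ent, Fintype.sum_prod_type, Fintype.sum_bool]
  have s1 := logb_split (w true) (g true true) (hw _) (hg _ _)
  have s2 := logb_split (w false) (g false true) (hw _) (hg _ _)
  have s3 := logb_split (w true) (g true false) (hw _) (hg _ _)
  have s4 := logb_split (w false) (g false false) (hw _) (hg _ _)
  have h1 := hgs true
  have h2 := hgs false
  linear_combination -s1 - s2 - s3 - s4 - (w true * Real.logb 2 (w true)) * h1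
    - (w false * Real.logb 2 (w false)) * h2

lemma ent_pair_fst (w : Bool → ℝ) (g : Bool → Bool → ℝ) (hw : ∀ x, 0 ≤ w x)
    (hg : ∀ x a, 0 ≤ g x a) (hgs : ∀ x, g x true + g x false = 1) :
    ent (fun q : Bool × Bool => w q.1 * g q.1 q.2)
      = ent w + (w true * ent (g true) + w false * ent (g false)) := by
  simp only [ent, Fintype.sum_prod_type, Fintype.sum_bool]
  have s1 := logb_split (w true) (g true true) (hw _) (hg _ _)
  have s2 := logb_split (w false) (g false true) (hw _) (hg _ _)
  have s3 := logb_split (w true) (g true false) (hw _) (hg _ _)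
  have s4 := logb_split (w false) (g false false) (hw _) (hg _ _)
  have h1 := hgs true
  have h2 := hgs false
  linear_combination -s1 - s2 - s3 - s4 - (w true * Real.logb 2 (w true)) * h1
    - (w false * Real.logb 2 (w false)) * h2

lemma ent_triple (w : Bool → ℝ) (g : Bool → Bool × Bool → ℝ) (hw : ∀ x, 0 ≤ w x)
    (hg : ∀ x q, 0 ≤ g x q) (hgs : ∀ x, g x (true,true) + g x (true,false) + g x (false,true) + g x (false,false) = 1) :
    ent (fun t : Bool × Bool × Bool => w t.2.2 * g t.2.2 (t.1, t.2.1))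
      = ent w + (w true * ent (g true) + w false * ent (g false)) := by
  simp only [ent, Fintype.sum_prod_type, Fintype.sum_bool]
  have s1 := logb_split (w true) (g true (true,true)) (hw _) (hg _ _)
  have s2 := logb_split (w true) (g true (true,false)) (hw _) (hg _ _)
  have s3 := logb_split (w true) (g true (false,true)) (hw _) (hg _ _)
  have s4 := logb_split (w true) (g true (false,false)) (hw _) (hg _ _)
  have s5 := logb_split (w false) (g false (true,true)) (hw _) (hg _ _)
  have s6 := logb_split (w false) (g false (true,false)) (hw _) (hg _ _)
  have s7 := logb_split (w false) (g false (false,true)) (hw _) (hg _ _)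
  have s8 := logb_split (w false) (g false (false,false)) (hw _) (hg _ _)
  have h1 := hgs true
  have h2 := hgs false
  linear_combination -s1 - s2 - s3 - s4 - s5 - s6 - s7 - s8
    - (w true * Real.logb 2 (w true)) * h1 - (w false * Real.logb 2 (w false)) * h2

lemma ent_bool (f : Bool → ℝ) (h : f false = 1 - f true) : ent f = h2 (f true) := by
  simp only [ent, Fintype.sum_bool, h, h2]; ring


def Ibits (a b t : ℝ) : ℝ := h2 ((1-t)*a + t*b) - (1-t)*h2 a - t*h2 b

lemma MI_formula (p2 : Bool → ℝ) (hp2 : IsPMF p2) :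
    MI (fun z : Bool × Bool => p2 z.1 * W2m z.1 z.2) (fun z => z.1) (fun z => z.2)
      = Ibits 0.1 0.5 (p2 true) := by
  have hq0 := hp2.1
  have hqf : p2 false = 1 - p2 true := by
    have := hp2.2; rw [Fintype.sum_bool] at this; linarith
  have dX : distOf (fun z : Bool × Bool => p2 z.1 * W2m z.1 z.2) (fun z => z.1) = p2 := by
    funext x; cases x <;> simp [distOf, Fintype.sum_prod_type, Fintype.sum_bool, W2m, gval] <;> ring
  have dY : distOf (fun z : Bool × Bool => p2 z.1 * W2m z.1 z.2) (fun z => z.2)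
      = fun y => p2 false * W2m false y + p2 true * W2m true y := by
    funext y; cases y <;> simp [distOf, Fintype.sum_prod_type, Fintype.sum_bool, W2m, gval] <;> ring
  have dJ : distOf (fun z : Bool × Bool => p2 z.1 * W2m z.1 z.2) (fun z => (z.1, z.2))
      = fun q : Bool × Bool => p2 q.1 * W2m q.1 q.2 := by
    funext q; obtain ⟨x, y⟩ := q
    cases x <;> cases y <;>
      simp [distOf, Fintype.sum_prod_type, Fintype.sum_bool, W2m, gval]
  have hWnn : ∀ x a, (0:ℝ) ≤ W2m x a := by
    intro x a; cases x <;> cases a <;> norm_num [W2m, gval]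
  have hWs : ∀ x, W2m x true + W2m x false = 1 := by
    intro x; cases x <;> norm_num [W2m, gval]
  have eJ : ent (fun q : Bool × Bool => p2 q.1 * W2m q.1 q.2)
      = ent p2 + (p2 true * ent (W2m true) + p2 false * ent (W2m false)) :=
    ent_pair_fst p2 W2m hq0 hWnn hWs
  have eWt : ent (W2m true) = h2 0.5 := by
    have := ent_bool (W2m true) (by norm_num [W2m, gval])
    simpa [W2m, gval] using this
  have eWf : ent (W2m false) = h2 0.1 := by
    have := ent_bool (W2m false) (by norm_num [W2m, gval])
    simpa [W2m, gval] using this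
  have eY : ent (fun y => p2 false * W2m false y + p2 true * W2m true y)
      = h2 ((1 - p2 true) * 0.1 + p2 true * 0.5) := by
    have h := ent_bool (fun y => p2 false * W2m false y + p2 true * W2m true y)
      (by simp only [W2m, gval]; norm_num; linarith)
    rw [h]
    norm_num [W2m, gval, hqf]
  rw [MI, H, H, H, dX, dY, dJ, eJ, eWt, eWf, eY, Ibits, hqf]
  ring


lemma CMI_formula (p1 p2 : Bool → ℝ) (hp1 : IsPMF p1) (hp2 : IsPMF p2) :
    CMI (fun z : Bool × Bool × Bool => p1 z.1 * p2 z.2.1 * W1m z.1 z.2.1 z.2.2)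
          (fun z => z.2.1) (fun z => z.2.2) (fun z => z.1)
      = (1 - p1 true) * Ibits 0.1 0.3 (p2 true) + p1 true * Ibits 0.5 0.25 (p2 true) := by
  have hp0 := hp1.1
  have hq0 := hp2.1
  have hpf : p1 false = 1 - p1 true := by
    have := hp1.2; rw [Fintype.sum_bool] at this; linarith
  have hqf : p2 false = 1 - p2 true := by
    have := hp2.2; rw [Fintype.sum_bool] at this; linarith
  set μ : Bool × Bool × Bool → ℝ := fun z => p1 z.1 * p2 z.2.1 * W1m z.1 z.2.1 z.2.2 with hμ
  -- distributions
  have dZ : distOf μ (fun z => z.1) = p1 := by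
    funext x; cases x <;>
      simp [hμ, distOf, Fintype.sum_prod_type, Fintype.sum_bool, W1m, fval] <;> ring_nf <;>
      rw [hqf] <;> ring
  have dXZ : distOf μ (fun z => (z.2.1, z.1)) = fun q : Bool × Bool => p1 q.2 * p2 q.1 := by
    funext q; obtain ⟨x, y⟩ := q
    cases x <;> cases y <;>
      simp [hμ, distOf, Fintype.sum_prod_type, Fintype.sum_bool, W1m, fval] <;> ring
  have dYZ : distOf μ (fun z => (z.2.2, z.1))
      = fun q : Bool × Bool =>
          p1 q.2 * (p2 false * W1m q.2 false q.1 + p2 true * W1m q.2 true q.1) := by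
    funext q; obtain ⟨x, y⟩ := q
    cases x <;> cases y <;>
      simp [hμ, distOf, Fintype.sum_prod_type, Fintype.sum_bool, W1m, fval] <;> ring
  have dXYZ : distOf μ (fun z => (z.2.1, z.2.2, z.1))
      = fun t : Bool × Bool × Bool => p1 t.2.2 * (p2 t.1 * W1m t.2.2 t.1 t.2.1) := by
    funext t; obtain ⟨x, y, z⟩ := t
    cases x <;> cases y <;> cases z <;>
      simp [hμ, distOf, Fintype.sum_prod_type, Fintype.sum_bool, W1m, fval] <;> ring
  -- entropy computations
  have hWnn : ∀ x1 x2 y, (0:ℝ) ≤ W1m x1 x2 y := by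
    intro x1 x2 y; cases x1 <;> cases x2 <;> cases y <;> norm_num [W1m, fval]
  have hrnn : ∀ x1 y, (0:ℝ) ≤ p2 false * W1m x1 false y + p2 true * W1m x1 true y := by
    intro x1 y
    have := mul_nonneg (hq0 false) (hWnn x1 false y)
    have := mul_nonneg (hq0 true) (hWnn x1 true y)
    linarith
  have hrs : ∀ x1, (p2 false * W1m x1 false true + p2 true * W1m x1 true true)
      + (p2 false * W1m x1 false false + p2 true * W1m x1 true false) = 1 := by
    intro x1; cases x1 <;> simp [W1m, fval, hqf] <;> ring
  have eXZ : ent (fun q : Bool × Bool => p1 q.2 * p2 q.1)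
      = ent p1 + (p1 true * ent p2 + p1 false * ent p2) :=
    ent_pair_snd p1 (fun _ => p2) hp0 (fun _ a => hq0 a)
      (by intro x; show p2 true + p2 false = 1; rw [hqf]; ring)
  have eYZ : ent (fun q : Bool × Bool =>
        p1 q.2 * (p2 false * W1m q.2 false q.1 + p2 true * W1m q.2 true q.1))
      = ent p1 + (p1 true * ent (fun y => p2 false * W1m true false y + p2 true * W1m true true y)
          + p1 false * ent (fun y => p2 false * W1m false false y + p2 true * W1m false true y)) :=
    ent_pair_snd p1
      (fun x1 y => p2 false * W1m x1 false y + p2 true * W1m x1 true y) hp0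
      (fun x1 y => hrnn x1 y) hrs
  have eXYZ : ent (fun t : Bool × Bool × Bool => p1 t.2.2 * (p2 t.1 * W1m t.2.2 t.1 t.2.1))
      = ent p1 + (p1 true * ent (fun q : Bool × Bool => p2 q.1 * W1m true q.1 q.2)
          + p1 false * ent (fun q : Bool × Bool => p2 q.1 * W1m false q.1 q.2)) :=
    ent_triple p1 (fun x1 (q : Bool × Bool) => p2 q.1 * W1m x1 q.1 q.2) hp0
      (fun x1 q => mul_nonneg (hq0 q.1) (hWnn x1 q.1 q.2))
      (by intro x1; cases x1 <;> simp [W1m, fval, hqf] <;> ring)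
  have eInner : ∀ x1, ent (fun q : Bool × Bool => p2 q.1 * W1m x1 q.1 q.2)
      = ent p2 + (p2 true * ent (W1m x1 true) + p2 false * ent (W1m x1 false)) := by
    intro x1
    exact ent_pair_fst p2 (W1m x1) hq0 (fun x2 y => hWnn x1 x2 y)
      (by intro x2; cases x2 <;> norm_num [W1m, fval])
  have eW : ∀ x1 x2, ent (W1m x1 x2) = h2 (fval x1 x2) := by
    intro x1 x2
    have := ent_bool (W1m x1 x2) (by simp [W1m])
    simpa [W1m] using this
  have eRt : ent (fun y => p2 false * W1m true false y + p2 true * W1m true true y)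
      = h2 ((1 - p2 true) * 0.5 + p2 true * 0.25) := by
    have h := ent_bool (fun y => p2 false * W1m true false y + p2 true * W1m true true y)
      (by simp only [W1m, fval]; norm_num; linarith)
    rw [h]; norm_num [W1m, fval, hqf]
  have eRf : ent (fun y => p2 false * W1m false false y + p2 true * W1m false true y)
      = h2 ((1 - p2 true) * 0.1 + p2 true * 0.3) := by
    have h := ent_bool (fun y => p2 false * W1m false false y + p2 true * W1m false true y)
      (by simp only [W1m, fval]; norm_num; linarith)
    rw [h]; norm_num [W1m, fval, hqf]
  rw [CMI, H, H, H, H, dXZ, dYZ, dXYZ, dZ, eXZ, eYZ, eXYZ, eInner true, eInner false,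
    eW, eW, eW, eW, eRt, eRf]
  simp only [fval, Ibits, if_true, if_false, Bool.false_eq_true]
  rw [hpf, hqf]
  ring


open Set in
lemma concave_comb (c1 d1 c2 d2 K L : ℝ)
    (hio1 : ∀ b ∈ Icc (0:ℝ) 1, c1 + d1*b ∈ Ioo (0:ℝ) 1)
    (hio2 : ∀ b ∈ Icc (0:ℝ) 1, c2 + d2*b ∈ Ioo (0:ℝ) 1)
    (hdom : ∀ b ∈ Icc (0:ℝ) 1,
      d2^2 * ((c1+d1*b) * (1 - (c1+d1*b))) ≤ d1^2 * ((c2+d2*b) * (1 - (c2+d2*b)))) :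
    ConcaveOn ℝ (Icc 0 1)
      (fun b => Real.binEntropy (c1+d1*b) - Real.binEntropy (c2+d2*b) + (K + L*b)) := by
  have haff1 : ∀ b : ℝ, HasDerivAt (fun b => c1 + d1*b) d1 b := by
    intro b; simpa using ((hasDerivAt_id b).const_mul d1).const_add c1
  have haff2 : ∀ b : ℝ, HasDerivAt (fun b => c2 + d2*b) d2 b := by
    intro b; simpa using ((hasDerivAt_id b).const_mul d2).const_add c2
  apply concaveOn_of_hasDerivWithinAt2_nonpos (convex_Icc 0 1)
    (f' := fun b => d1 * (Real.log (1-(c1+d1*b)) - Real.log (c1+d1*b))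
      - d2 * (Real.log (1-(c2+d2*b)) - Real.log (c2+d2*b)) + L)
    (f'' := fun b => d1^2 * (-(1/(1-(c1+d1*b))) - 1/(c1+d1*b))
      - d2^2 * (-(1/(1-(c2+d2*b))) - 1/(c2+d2*b)))
  · fun_prop
  · intro b hb
    rw [interior_Icc] at hb
    obtain ⟨hu0, hu1⟩ := hio1 b (Ioo_subset_Icc_self hb)
    obtain ⟨hv0, hv1⟩ := hio2 b (Ioo_subset_Icc_self hb)
    have h1 : HasDerivAt (fun b => Real.binEntropy (c1+d1*b))
        ((Real.log (1-(c1+d1*b)) - Real.log (c1+d1*b)) * d1) b := by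
      have := (Real.hasDerivAt_binEntropy (ne_of_gt hu0) (ne_of_lt hu1)).comp b (haff1 b)
      exact this
    have h2 : HasDerivAt (fun b => Real.binEntropy (c2+d2*b))
        ((Real.log (1-(c2+d2*b)) - Real.log (c2+d2*b)) * d2) b := by
      have := (Real.hasDerivAt_binEntropy (ne_of_gt hv0) (ne_of_lt hv1)).comp b (haff2 b)
      exact this
    have h3 := ((h1.sub h2).add_const (K + L*b)).add ((haff1 b).const_add 0)
    have := (((h1.sub h2).add_const 0).congr_deriv rfl)
    have hmain : HasDerivAt (fun b => Real.binEntropy (c1+d1*b) - Real.binEntropy (c2+d2*b)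
        + (K + L*b))
        (d1 * (Real.log (1-(c1+d1*b)) - Real.log (c1+d1*b))
          - d2 * (Real.log (1-(c2+d2*b)) - Real.log (c2+d2*b)) + L) b := by
      have hlin : HasDerivAt (fun b : ℝ => K + L*b) L b := by
        simpa using ((hasDerivAt_id b).const_mul L).const_add K
      have := (h1.sub h2).add hlin
      exact this.congr_deriv (by ring)
    exact hmain.hasDerivWithinAt
  · intro b hb
    rw [interior_Icc] at hb
    obtain ⟨hu0, hu1⟩ := hio1 b (Ioo_subset_Icc_self hb)
    obtain ⟨hv0, hv1⟩ := hio2 b (Ioo_subset_Icc_self hb)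
    have hl1 : HasDerivAt (fun b => Real.log (1-(c1+d1*b))) ((1-(c1+d1*b))⁻¹ * (-d1)) b := by
      have ha : HasDerivAt (fun b => 1-(c1+d1*b)) (-d1) b := by
        simpa using (haff1 b).const_sub 1
      exact (Real.hasDerivAt_log (by linarith)).comp b ha
    have hl2 : HasDerivAt (fun b => Real.log (c1+d1*b)) ((c1+d1*b)⁻¹ * d1) b :=
      (Real.hasDerivAt_log (by linarith)).comp b (haff1 b)
    have hl3 : HasDerivAt (fun b => Real.log (1-(c2+d2*b))) ((1-(c2+d2*b))⁻¹ * (-d2)) b := by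
      have ha : HasDerivAt (fun b => 1-(c2+d2*b)) (-d2) b := by
        simpa using (haff2 b).const_sub 1
      exact (Real.hasDerivAt_log (by linarith)).comp b ha
    have hl4 : HasDerivAt (fun b => Real.log (c2+d2*b)) ((c2+d2*b)⁻¹ * d2) b :=
      (Real.hasDerivAt_log (by linarith)).comp b (haff2 b)
    have hmain := ((((hl1.sub hl2).const_mul d1).sub ((hl3.sub hl4).const_mul d2)).add_const L)
    have heq : d1 * ((1-(c1+d1*b))⁻¹ * (-d1) - (c1+d1*b)⁻¹ * d1)
        - d2 * ((1-(c2+d2*b))⁻¹ * (-d2) - (c2+d2*b)⁻¹ * d2)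
        = d1^2 * (-(1/(1-(c1+d1*b))) - 1/(c1+d1*b))
          - d2^2 * (-(1/(1-(c2+d2*b))) - 1/(c2+d2*b)) := by
      field_simp
    rw [heq] at hmain
    exact hmain.hasDerivWithinAt
  · intro b hb
    rw [interior_Icc] at hb
    obtain ⟨hu0, hu1⟩ := hio1 b (Ioo_subset_Icc_self hb)
    obtain ⟨hv0, hv1⟩ := hio2 b (Ioo_subset_Icc_self hb)
    have hd := hdom b (Ioo_subset_Icc_self hb)
    have hu : (0:ℝ) < (c1+d1*b) * (1-(c1+d1*b)) := mul_pos hu0 (by linarith)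
    have hv : (0:ℝ) < (c2+d2*b) * (1-(c2+d2*b)) := mul_pos hv0 (by linarith)
    have hne1 : c1 + d1*b ≠ 0 := ne_of_gt hu0
    have hne2 : 1 - (c1 + d1*b) ≠ 0 := ne_of_gt (by linarith)
    have hne3 : c2 + d2*b ≠ 0 := ne_of_gt hv0
    have hne4 : 1 - (c2 + d2*b) ≠ 0 := ne_of_gt (by linarith)
    have e1 : -(1/(1-(c1+d1*b))) - 1/(c1+d1*b) = -(1/((c1+d1*b) * (1-(c1+d1*b)))) := by
      field_simp; ring
    have e2 : -(1/(1-(c2+d2*b))) - 1/(c2+d2*b) = -(1/((c2+d2*b) * (1-(c2+d2*b)))) := by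
      field_simp; ring
    rw [e1, e2]
    rw [sub_nonpos, mul_neg, mul_neg, neg_le_neg_iff, mul_one_div, mul_one_div,
      div_le_div_iff₀ hv hu]
    linarith [hd]

open Set in
lemma concave_nonneg {f : ℝ → ℝ} (hc : ConcaveOn ℝ (Icc 0 1) f) (h0 : 0 ≤ f 0) (h1 : 0 ≤ f 1) :
    ∀ b ∈ Icc (0:ℝ) 1, 0 ≤ f b := by
  intro b hb
  have := hc.2 (left_mem_Icc.2 zero_le_one) (right_mem_Icc.2 zero_le_one)
    (by linarith [hb.2] : (0:ℝ) ≤ 1 - b) hb.1 (by ring)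
  simp only [smul_eq_mul, mul_zero, mul_one] at this
  have hb' : (1 - b) * 0 + b * 1 = b := by ring
  calc (0:ℝ) ≤ (1-b) * f 0 + b * f 1 := by
        have := mul_nonneg (by linarith [hb.2] : (0:ℝ) ≤ 1-b) h0
        have := mul_nonneg hb.1 h1
        linarith
    _ ≤ f b := by
        have h := hc.2 (left_mem_Icc.2 zero_le_one) (right_mem_Icc.2 zero_le_one)
          (by linarith [hb.2] : (0:ℝ) ≤ 1 - b) hb.1 (by ring)
        simpa [smul_eq_mul, hb'] using h


lemma h2_eq (t : ℝ) : h2 t = Real.binEntropy t / Real.log 2 := by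
  rw [h2, Real.binEntropy, Real.log_inv, Real.log_inv, Real.logb, Real.logb]
  ring

open Set in
lemma key0 : ∀ b ∈ Icc (0:ℝ) 1, Ibits 0.1 0.3 b ≤ Ibits 0.1 0.5 b := by
  have hl2 : (0:ℝ) < Real.log 2 := Real.log_pos (by norm_num)
  have h05 : Real.binEntropy 0.5 = Real.log 2 := Real.binEntropy_eq_log_two.2 (by norm_num)
  have hconc := concave_comb (0.1:ℝ) 0.4 0.1 0.2 0 (Real.binEntropy 0.3 - Real.log 2)
    (by intro b hb; simp only [Set.mem_Ioo]; constructor <;> nlinarith [hb.1, hb.2])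
    (by intro b hb; simp only [Set.mem_Ioo]; constructor <;> nlinarith [hb.1, hb.2])
    (by intro b hb; nlinarith [hb.1, hb.2])
  have hF0 : Real.binEntropy (0.1+0.4*(0:ℝ)) - Real.binEntropy (0.1+0.2*(0:ℝ))
      + (0 + (Real.binEntropy 0.3 - Real.log 2)*(0:ℝ)) = 0 := by ring
  have hF1 : Real.binEntropy (0.1+0.4*(1:ℝ)) - Real.binEntropy (0.1+0.2*(1:ℝ))
      + (0 + (Real.binEntropy 0.3 - Real.log 2)*(1:ℝ)) = 0 := by
    have e1 : (0.1:ℝ)+0.4*1 = 0.5 := by norm_num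
    have e2 : (0.1:ℝ)+0.2*1 = 0.3 := by norm_num
    rw [e1, e2, h05]; ring
  have hnn := concave_nonneg hconc (by rw [hF0]) (by rw [hF1])
  intro b hb
  have hb' := hnn b hb
  have hid : Real.log 2 * (Ibits 0.1 0.5 b - Ibits 0.1 0.3 b)
      = Real.binEntropy (0.1+0.4*b) - Real.binEntropy (0.1+0.2*b)
        + (0 + (Real.binEntropy 0.3 - Real.log 2)*b) := by
    have a1 : (1-b)*(0.1:ℝ) + b*0.5 = 0.1+0.4*b := by ring
    have a2 : (1-b)*(0.1:ℝ) + b*0.3 = 0.1+0.2*b := by ring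
    simp only [Ibits, h2_eq, a1, a2, h05]
    field_simp
    ring
  nlinarith [hb', hid]

open Set in
lemma key1 : ∀ b ∈ Icc (0:ℝ) 1, Ibits 0.5 0.25 b ≤ Ibits 0.1 0.5 b := by
  have hl2 : (0:ℝ) < Real.log 2 := Real.log_pos (by norm_num)
  have h05 : Real.binEntropy 0.5 = Real.log 2 := Real.binEntropy_eq_log_two.2 (by norm_num)
  have hconc := concave_comb (0.1:ℝ) 0.4 0.5 (-0.25)
    (Real.log 2 - Real.binEntropy 0.1)
    (Real.binEntropy 0.1 + Real.binEntropy 0.25 - 2*Real.log 2)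
    (by intro b hb; simp only [Set.mem_Ioo]; constructor <;> nlinarith [hb.1, hb.2])
    (by intro b hb; simp only [Set.mem_Ioo]; constructor <;> nlinarith [hb.1, hb.2])
    (by intro b hb; nlinarith [hb.1, hb.2])
  have hF0 : Real.binEntropy (0.1+0.4*(0:ℝ)) - Real.binEntropy (0.5+(-0.25)*(0:ℝ))
      + ((Real.log 2 - Real.binEntropy 0.1)
        + (Real.binEntropy 0.1 + Real.binEntropy 0.25 - 2*Real.log 2)*(0:ℝ)) = 0 := by
    have e1 : (0.1:ℝ)+0.4*0 = 0.1 := by norm_num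
    have e2 : (0.5:ℝ)+(-0.25)*0 = 0.5 := by norm_num
    rw [e1, e2, h05]; ring
  have hF1 : Real.binEntropy (0.1+0.4*(1:ℝ)) - Real.binEntropy (0.5+(-0.25)*(1:ℝ))
      + ((Real.log 2 - Real.binEntropy 0.1)
        + (Real.binEntropy 0.1 + Real.binEntropy 0.25 - 2*Real.log 2)*(1:ℝ)) = 0 := by
    have e1 : (0.1:ℝ)+0.4*1 = 0.5 := by norm_num
    have e2 : (0.5:ℝ)+(-0.25)*1 = 0.25 := by norm_num
    rw [e1, e2, h05]; ring
  have hnn := concave_nonneg hconc (by rw [hF0]) (by rw [hF1])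
  intro b hb
  have hb' := hnn b hb
  have hid : Real.log 2 * (Ibits 0.1 0.5 b - Ibits 0.5 0.25 b)
      = Real.binEntropy (0.1+0.4*b) - Real.binEntropy (0.5+(-0.25)*b)
        + ((Real.log 2 - Real.binEntropy 0.1)
          + (Real.binEntropy 0.1 + Real.binEntropy 0.25 - 2*Real.log 2)*b) := by
    have a1 : (1-b)*(0.1:ℝ) + b*0.5 = 0.1+0.4*b := by ring
    have a2 : (1-b)*(0.5:ℝ) + b*0.25 = 0.5+(-0.25)*b := by ring
    simp only [Ibits, h2_eq, a1, a2, h05]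
    field_simp
    ring
  nlinarith [hb', hid]


/-- For this one-sided binary channel, (i) `I(X2;Y2) ≥ I(X2;Y1|X1)` for
every product input, yet (ii) there is no conditional probability `q(y1|x1,y2)` with
`p(y1|x1,x2) = ∑ y2, p(y2|x2) q(y1|x1,y2)`, i.e. the Markov chain `X2 - (X1,Y2) - Y1`
factorization fails. -/
theorem counterexample_MI_without_markov :
    (∀ p1 p2 : Bool → ℝ, IsPMF p1 → IsPMF p2 →
      CMI (fun z : Bool × Bool × Bool => p1 z.1 * p2 z.2.1 * W1m z.1 z.2.1 z.2.2)
          (fun z => z.2.1) (fun z => z.2.2) (fun z => z.1)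
        ≤ MI (fun z : Bool × Bool => p2 z.1 * W2m z.1 z.2) (fun z => z.1) (fun z => z.2))
    ∧ ¬ ∃ q : Bool → Bool → Bool → ℝ, (∀ x1 y2, IsPMF (q x1 y2)) ∧
        ∀ x1 x2 y1, W1m x1 x2 y1 = ∑ y2, W2m x2 y2 * q x1 y2 y1 := by
  constructor
  · intro p1 p2 hp1 hp2
    have ha0 := hp1.1 true
    have ha1 : p1 true ≤ 1 := by
      have := hp1.2; rw [Fintype.sum_bool] at this
      have := hp1.1 false; linarith
    have hb : p2 true ∈ Set.Icc (0:ℝ) 1 := by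
      refine ⟨hp2.1 true, ?_⟩
      have := hp2.2; rw [Fintype.sum_bool] at this
      have := hp2.1 false; linarith
    rw [CMI_formula p1 p2 hp1 hp2, MI_formula p2 hp2]
    have h0 := key0 (p2 true) hb
    have h1 := key1 (p2 true) hb
    nlinarith [h0, h1]
  · rintro ⟨q, hq, heq⟩
    have h1 := heq true false true
    have h2 := heq true true true
    have h3 := (hq true true).1 true
    have h4 := (hq true false).1 true
    simp [W1m, W2m, fval, gval, Fintype.sum_bool] at h1 h2
    nlinarith [h1, h2, h3, h4]

end IT
end
end
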